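/- Let n ≥ 3 and let f = (f_0, …, f_n) be given by f_k = a_0^{n−k} b_0^k + a_1^{n−k} b_1^k, where v_0 = (a_0, b_0) and v_1 = (a_1, b_1) are linearly independent vectors in ℂ². If f ∈ 𝒜₂, then (a_0 a_1 + b_0 b_1)² = −(a_1 b_0 − a_0 b_1)² (i.e., θ(v_0, v_1) = −1). -/

import Mathlib

/-- `f ∈ 𝒜₂`: there exist `H ∈ O₂(ℂ)` and a nonzero `c ∈ ℂ` such that
`f = c ((H(1,i))^{⊗n} + (H(1,-i))^{⊗n})`. -/
def MemA2 (n : ℕ) (f : ℕ → ℂ) : Prop :=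
  ∃ (H : Matrix (Fin 2) (Fin 2) ℂ) (c : ℂ),
    H.transpose * H = 1 ∧ c ≠ 0 ∧
    ∀ k ≤ n, f k =
      c * (H.mulVec ![1, Complex.I] 0 ^ (n - k) * H.mulVec ![1, Complex.I] 1 ^ k +
        H.mulVec ![1, -Complex.I] 0 ^ (n - k) * H.mulVec ![1, -Complex.I] 1 ^ k)

/-- elimination: if e₀ v₀^{⊗m} + e₁ v₁^{⊗m} = 0 with v's independent then e₀ = 0. -/
lemma elim_aux (m : ℕ) (hm : 1 ≤ m) (e₀ e₁ a₀ b₀ a₁ b₁ : ℂ)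
    (hD : a₀ * b₁ - a₁ * b₀ ≠ 0) (hv : a₀ ≠ 0 ∨ b₀ ≠ 0)
    (h : ∀ k ≤ m, e₀ * a₀ ^ (m - k) * b₀ ^ k + e₁ * a₁ ^ (m - k) * b₁ ^ k = 0) :
    e₀ = 0 := by
  have h2 : ∀ k ≤ m - 1, e₀ * a₀ ^ (m - 1 - k) * b₀ ^ k * (a₀ * b₁ - a₁ * b₀) = 0 := by
    intro k hk
    have r1 := h k (by omega)
    have r2 := h (k + 1) (by omega)
    have e1 : m - k = (m - 1 - k) + 1 := by omega
    have e2 : m - (k + 1) = m - 1 - k := by omega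
    rw [e1] at r1
    rw [e2] at r2
    linear_combination b₁ * r1 - a₁ * r2
  rcases hv with ha | hb
  · have h0 := h2 0 (by omega)
    simp only [pow_zero, mul_one] at h0
    rcases mul_eq_zero.mp h0 with h' | h'
    · rcases mul_eq_zero.mp h' with h'' | h''
      · exact h''
      · exact absurd h'' (pow_ne_zero _ ha)
    · exact absurd h' hD
  · have h0 := h2 (m - 1) (le_refl _)
    have : m - 1 - (m - 1) = 0 := by omega
    rw [this] at h0
    simp only [pow_zero, one_mul, mul_one] at h0
    rcases mul_eq_zero.mp h0 with h' | h'
    · rcases mul_eq_zero.mp h' with h'' | h''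
      · simpa using h''
      · exact absurd h'' (pow_ne_zero _ hb)
    · exact absurd h' hD

/-- parallel extraction -/
lemma para_aux {a b C D : ℂ} (h : D * a - C * b = 0) (hne : C ≠ 0 ∨ D ≠ 0) :
    ∃ t, a = t * C ∧ b = t * D := by
  rcases hne with hc | hd
  · refine ⟨a / C, by field_simp, ?_⟩
    field_simp
    linear_combination -h
  · refine ⟨b / D, ?_, by field_simp⟩
    field_simp
    linear_combination h

lemma notboth_aux {C D a₀ b₀ a₁ b₁ : ℂ} (hdet : a₀ * b₁ - a₁ * b₀ ≠ 0)
    (h0 : D * a₀ - C * b₀ = 0) (h1 : D * a₁ - C * b₁ = 0) : C = 0 ∧ D = 0 := by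
  constructor
  · have : C * (a₀ * b₁ - a₁ * b₀) = 0 := by linear_combination a₁ * h0 - a₀ * h1
    rcases mul_eq_zero.mp this with h | h
    · exact h
    · exact absurd h hdet
  · have : D * (a₀ * b₁ - a₁ * b₀) = 0 := by linear_combination b₁ * h0 - b₀ * h1
    rcases mul_eq_zero.mp this with h | h
    · exact h
    · exact absurd h hdet

lemma finish_aux {C0 D0 C1 D1 a₀ b₀ a₁ b₁ : ℂ}
    (hsum : C0 * C1 + D0 * D1 = 2) (hdet2 : (C1 * D0 - C0 * D1) ^ 2 = -4)
    (h0 : D0 * a₀ - C0 * b₀ = 0) (h1 : D1 * a₁ - C1 * b₁ = 0) :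
    (a₀ * a₁ + b₀ * b₁) ^ 2 = -(a₁ * b₀ - a₀ * b₁) ^ 2 := by
  have hw0 : C0 ≠ 0 ∨ D0 ≠ 0 := by
    by_contra h
    push_neg at h
    rw [h.1, h.2] at hsum
    simp at hsum
  have hw1 : C1 ≠ 0 ∨ D1 ≠ 0 := by
    by_contra h
    push_neg at h
    rw [h.1, h.2] at hsum
    simp at hsum
  obtain ⟨t, ht1, ht2⟩ := para_aux h0 hw0
  obtain ⟨u, hu1, hu2⟩ := para_aux h1 hw1
  subst ht1 ht2 hu1 hu2
  linear_combination (t^2 * u^2 * (C0*C1 + D0*D1 + 2)) * hsum + t^2 * u^2 * hdet2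

/-- If `f = v₀^{⊗n} + v₁^{⊗n}` with `v₀ = (a₀, b₀)`, `v₁ = (a₁, b₁)` linearly independent,
`n ≥ 3`, and `f ∈ 𝒜₂`, then `(a₀ a₁ + b₀ b₁)² = −(a₁ b₀ − a₀ b₁)²`, i.e.
`θ(v₀, v₁) = −1`. -/
theorem stmt_8 (n : ℕ) (hn : 3 ≤ n) (a₀ b₀ a₁ b₁ : ℂ)
    (hli : LinearIndependent ℂ ![(a₀, b₀), (a₁, b₁)]) (f : ℕ → ℂ)
    (hf : ∀ k ≤ n, f k = a₀ ^ (n - k) * b₀ ^ k + a₁ ^ (n - k) * b₁ ^ k)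
    (hmem : MemA2 n f) :
    (a₀ * a₁ + b₀ * b₁) ^ 2 = -(a₁ * b₀ - a₀ * b₁) ^ 2 := by
  -- determinant nonzero from linear independence
  have hdet : a₀ * b₁ - a₁ * b₀ ≠ 0 := by
    intro h
    rw [linearIndependent_fin2] at hli
    obtain ⟨hy, hxy⟩ := hli
    simp only [Matrix.cons_val_one, Matrix.head_cons, Matrix.cons_val_zero] at hy hxy
    have hy' : a₁ ≠ 0 ∨ b₁ ≠ 0 := by
      by_contra hc
      push_neg at hc
      exact hy (by simp [Prod.ext_iff, hc.1, hc.2])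
    rcases hy' with h1 | h1
    · exact hxy (a₀ / a₁) (by
        rw [Prod.smul_mk, smul_eq_mul, smul_eq_mul, Prod.mk.injEq]
        constructor
        · field_simp
        · field_simp
          linear_combination h)
    · exact hxy (b₀ / b₁) (by
        rw [Prod.smul_mk, smul_eq_mul, smul_eq_mul, Prod.mk.injEq]
        constructor
        · field_simp
          linear_combination -h
        · field_simp)
  have hv0 : a₀ ≠ 0 ∨ b₀ ≠ 0 := by
    have := hli.ne_zero 0
    simp only [Matrix.cons_val_zero] at this
    by_contra hc
    push_neg at hc
    exact this (by simp [Prod.ext_iff, hc.1, hc.2])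
  have hv1 : a₁ ≠ 0 ∨ b₁ ≠ 0 := by
    have := hli.ne_zero 1
    simp only [Matrix.cons_val_one, Matrix.head_cons] at this
    by_contra hc
    push_neg at hc
    exact this (by simp [Prod.ext_iff, hc.1, hc.2])
  obtain ⟨H, c, hH, hc, hw⟩ := hmem
  set p := H 0 0 with hp
  set q := H 0 1 with hq
  set r := H 1 0 with hr
  set s := H 1 1 with hs
  -- orthogonality relations
  have h00 := congrFun (congrFun hH 0) 0
  have h01 := congrFun (congrFun hH 0) 1
  have h11 := congrFun (congrFun hH 1) 1
  simp only [Matrix.mul_apply, Matrix.transpose_apply, Fin.sum_univ_two] at h00 h01 h11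
  rw [Matrix.one_apply_eq] at h00
  rw [Matrix.one_apply_eq] at h11
  rw [Matrix.one_apply_ne (by decide : (0 : Fin 2) ≠ 1)] at h01
  -- mulVec values
  have hm0 : H.mulVec ![1, Complex.I] 0 = p + q * Complex.I := by
    simp [Matrix.mulVec, dotProduct, Fin.sum_univ_two, Matrix.vecHead, Matrix.vecTail]; rfl
  have hm1 : H.mulVec ![1, Complex.I] 1 = r + s * Complex.I := by
    simp [Matrix.mulVec, dotProduct, Fin.sum_univ_two, Matrix.vecHead, Matrix.vecTail]; rfl
  have hm0' : H.mulVec ![1, -Complex.I] 0 = p - q * Complex.I := by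
    simp [Matrix.mulVec, dotProduct, Fin.sum_univ_two, Matrix.vecHead, Matrix.vecTail]; ring
  have hm1' : H.mulVec ![1, -Complex.I] 1 = r - s * Complex.I := by
    simp [Matrix.mulVec, dotProduct, Fin.sum_univ_two, Matrix.vecHead, Matrix.vecTail]; ring
  rw [hm0, hm1, hm0', hm1'] at hw
  set C0 : ℂ := p + q * Complex.I with hC0
  set D0 : ℂ := r + s * Complex.I with hD0
  set C1 : ℂ := p - q * Complex.I with hC1
  set D1 : ℂ := r - s * Complex.I with hD1
  have hsum : C0 * C1 + D0 * D1 = 2 := by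
    rw [hC0, hC1, hD0, hD1]
    linear_combination h00 + h11 - (q ^ 2 + s ^ 2) * Complex.I_sq
  have hdet2 : (C1 * D0 - C0 * D1) ^ 2 = -4 := by
    rw [hC0, hC1, hD0, hD1]
    linear_combination 4 * (p * s - q * r) ^ 2 * Complex.I_sq - 4 * (q ^ 2 + s ^ 2) * h00 -
      4 * h11 + 4 * (p * q + r * s) * h01
  set m := n - 2 with hmdef
  have hm1le : 1 ≤ m := by omega
  -- the key recurrence relation
  set e₀ : ℂ := D0 * D1 * a₀ ^ 2 - (C0 * D1 + C1 * D0) * (a₀ * b₀) + C0 * C1 * b₀ ^ 2 with he₀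
  set e₁ : ℂ := D0 * D1 * a₁ ^ 2 - (C0 * D1 + C1 * D0) * (a₁ * b₁) + C0 * C1 * b₁ ^ 2 with he₁
  have key : ∀ k ≤ m, e₀ * a₀ ^ (m - k) * b₀ ^ k + e₁ * a₁ ^ (m - k) * b₁ ^ k = 0 := by
    intro k hk
    have hk2 : k + 2 ≤ n := by omega
    have combo : D0 * D1 * f k - (C0 * D1 + C1 * D0) * f (k + 1) + C0 * C1 * f (k + 2) = 0 := by
      rw [hw k (by omega), hw (k + 1) (by omega), hw (k + 2) hk2]
      have he1 : n - k = (n - (k + 2)) + 2 := by omega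
      have he2 : n - (k + 1) = (n - (k + 2)) + 1 := by omega
      rw [he1, he2]
      ring
    rw [hf k (by omega), hf (k + 1) (by omega), hf (k + 2) hk2] at combo
    have he1 : n - k = (n - (k + 2)) + 2 := by omega
    have he2 : n - (k + 1) = (n - (k + 2)) + 1 := by omega
    have he3 : n - (k + 2) = m - k := by omega
    rw [he1, he2, he3] at combo
    rw [he₀, he₁]
    linear_combination combo
  have he0z : e₀ = 0 := elim_aux m hm1le e₀ e₁ a₀ b₀ a₁ b₁ hdet hv0 key
  have he1z : e₁ = 0 := by
    apply elim_aux m hm1le e₁ e₀ a₁ b₁ a₀ b₀ (by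
      intro h
      exact hdet (by linear_combination -h)) hv1
    intro k hk
    linear_combination key k hk
  -- factorizations
  have hf0 : (D0 * a₀ - C0 * b₀) * (D1 * a₀ - C1 * b₀) = 0 := by
    rw [he₀] at he0z
    linear_combination he0z
  have hf1 : (D0 * a₁ - C0 * b₁) * (D1 * a₁ - C1 * b₁) = 0 := by
    rw [he₁] at he1z
    linear_combination he1z
  rcases mul_eq_zero.mp hf0 with hX0 | hY0
  · rcases mul_eq_zero.mp hf1 with hX1 | hY1
    · exfalso
      obtain ⟨hc0, hd0⟩ := notboth_aux hdet hX0 hX1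
      rw [hc0, hd0] at hsum
      simp at hsum
    · exact finish_aux hsum hdet2 hX0 hY1
  · rcases mul_eq_zero.mp hf1 with hX1 | hY1
    · exact finish_aux (by linear_combination hsum) (by linear_combination hdet2) hY0 hX1
    · exfalso
      obtain ⟨hc1, hd1⟩ := notboth_aux hdet hY0 hY1
      rw [hc1, hd1] at hsum
      simp at hsum
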